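/- The self-adjoint equation E₃ is solved by the square of the hypergeometric function F(1/2,1/2,1;x): let f(x) = Σₙ₌₀^∞ ((∏ₖ₌₀^{n−1}(1/2+k)) / n!)² xⁿ (the Gauss hypergeometric series F(1/2,1/2,1;x)) and u(x) = f(x)². Then for every complex x with |x| < 1, x²(x−1)²u'''(x) + 3x(x−1)(2x−1)u''(x) + (7x²−7x+1)u'(x) + (x − 1/2)u(x) = 0. -/

import Mathlib

/-!
STATEMENT 16: The self-adjoint equation E₃ is solved by the square of the
hypergeometric function F(1/2,1/2,1;x): with u = F(1/2,1/2,1;·)², for |x| < 1,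
x²(x−1)²u''' + 3x(x−1)(2x−1)u'' + (7x²−7x+1)u' + (x−1/2)u = 0.
-/

/-- The Gauss hypergeometric series F(1/2,1/2,1;x). -/
noncomputable def hypF (x : ℂ) : ℂ :=
  ∑' n : ℕ, ((∏ k ∈ Finset.range n, ((1 : ℂ)/2 + k)) / (n.factorial : ℂ))^2 * x^n

/-- The square of F(1/2,1/2,1;x). -/
noncomputable def uSq (x : ℂ) : ℂ := (hypF x)^2


section AuxE3
open Finset

/-- Coefficients of F(1/2,1/2,1;x). -/
noncomputable def aco : ℕ → ℂ := fun n =>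
  ((∏ k ∈ Finset.range n, ((1 : ℂ)/2 + k)) / (n.factorial : ℂ))^2

/-- Coefficients of the derivative series. -/
noncomputable def dco (a : ℕ → ℂ) : ℕ → ℂ := fun n => ((n : ℂ) + 1) * a (n + 1)

/-- Sum of the power series with coefficients `a`. -/
noncomputable def fs (a : ℕ → ℂ) (x : ℂ) : ℂ := ∑' n : ℕ, a n * x ^ n

/-- Polynomially bounded coefficients. -/
def PB (a : ℕ → ℂ) : Prop := ∃ C : ℝ, ∃ p : ℕ, 0 ≤ C ∧ ∀ n : ℕ, ‖a n‖ ≤ C * ((n : ℝ) + 1) ^ p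

lemma summable_poly_geom (C : ℝ) (p : ℕ) {r : ℝ} (h0 : 0 < r) (h1 : r < 1) :
    Summable (fun n : ℕ => C * ((n : ℝ) + 1) ^ p * r ^ n) := by
  have hg : Summable (fun n : ℕ => (n : ℝ) ^ p * r ^ n) :=
    summable_pow_mul_geometric_of_norm_lt_one p (by rw [Real.norm_eq_abs, abs_of_pos h0]; exact h1)
  have h2 : Summable (fun n : ℕ => ((n : ℝ) + 1) ^ p * r ^ (n + 1)) := by
    have := (summable_nat_add_iff (f := fun n : ℕ => (n : ℝ) ^ p * r ^ n) 1).mpr hg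
    refine this.congr fun n => ?_
    push_cast
    ring
  have h3 := h2.mul_left (C / r)
  refine h3.congr fun n => ?_
  field_simp
  ring

lemma PB.summable {a : ℕ → ℂ} (ha : PB a) {x : ℂ} (hx : ‖x‖ < 1) :
    Summable (fun n : ℕ => a n * x ^ n) := by
  obtain ⟨C, p, hC, h⟩ := ha
  set r : ℝ := (‖x‖ + 1) / 2 with hr
  have hxr : ‖x‖ ≤ r := by rw [hr]; linarith
  have hr0 : 0 < r := by positivity
  have hr1 : r < 1 := by rw [hr]; linarith
  refine Summable.of_norm_bounded (summable_poly_geom C p hr0 hr1) fun n => ?_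
  rw [norm_mul, norm_pow]
  have h1 : ‖x‖ ^ n ≤ r ^ n := pow_le_pow_left₀ (norm_nonneg x) hxr n
  have h2 : (0:ℝ) ≤ C * ((n:ℝ)+1)^p := by positivity
  calc ‖a n‖ * ‖x‖ ^ n ≤ (C * ((n:ℝ)+1)^p) * r ^ n := by
        apply mul_le_mul (h n) h1 (by positivity) h2
    _ = C * ((n:ℝ)+1)^p * r ^ n := by ring

lemma PB.dstep {a : ℕ → ℂ} (ha : PB a) : PB (dco a) := by
  obtain ⟨C, p, hC, h⟩ := ha
  refine ⟨2 ^ p * C, p + 1, by positivity, fun n => ?_⟩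
  have h1 : ‖dco a n‖ = ((n:ℝ) + 1) * ‖a (n+1)‖ := by
    rw [dco, norm_mul]
    congr 1
    rw [show ((n:ℂ) + 1) = ((n+1 : ℕ) : ℂ) by push_cast; ring, Complex.norm_natCast]
    push_cast; ring
  rw [h1]
  have h2 : ‖a (n+1)‖ ≤ C * ((n:ℝ) + 2) ^ p := by
    have hh := h (n + 1); push_cast at hh
    rw [show ((n:ℝ) + 2) = ((n:ℝ) + 1 + 1) from by ring]; exact hh
  have h3 : ((n:ℝ) + 2) ^ p ≤ 2 ^ p * ((n:ℝ) + 1) ^ p := by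
    rw [← mul_pow]
    exact pow_le_pow_left₀ (by positivity) (by linarith [Nat.cast_nonneg (α := ℝ) n]) p
  calc ((n:ℝ) + 1) * ‖a (n+1)‖ ≤ ((n:ℝ) + 1) * (C * (2 ^ p * ((n:ℝ) + 1) ^ p)) := by
        apply mul_le_mul_of_nonneg_left _ (by positivity)
        exact h2.trans (by nlinarith [pow_nonneg (by linarith [Nat.cast_nonneg (α := ℝ) n] : (0:ℝ) ≤ (n:ℝ)+2) p])
    _ = 2 ^ p * C * ((n:ℝ) + 1) ^ (p + 1) := by ring

lemma PB.mul_lin {a : ℕ → ℂ} (ha : PB a) (z w : ℂ) :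
    PB (fun n => (z * n + w) * a n) := by
  obtain ⟨C, p, hC, h⟩ := ha
  refine ⟨(‖z‖ + ‖w‖) * C, p + 1, by positivity, fun n => ?_⟩
  have h1 : ‖z * n + w‖ ≤ (‖z‖ + ‖w‖) * ((n:ℝ) + 1) := by
    calc ‖z * (n:ℂ) + w‖ ≤ ‖z * (n:ℂ)‖ + ‖w‖ := norm_add_le _ _
      _ = ‖z‖ * (n:ℝ) + ‖w‖ := by rw [norm_mul, Complex.norm_natCast]
      _ ≤ (‖z‖ + ‖w‖) * ((n:ℝ) + 1) := by nlinarith [norm_nonneg z, norm_nonneg w, Nat.cast_nonneg (α := ℝ) n]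
  rw [norm_mul]
  calc ‖z * n + w‖ * ‖a n‖ ≤ ((‖z‖ + ‖w‖) * ((n:ℝ) + 1)) * (C * ((n:ℝ)+1)^p) := by
        apply mul_le_mul h1 (h n) (norm_nonneg _) (by positivity)
    _ = (‖z‖ + ‖w‖) * C * ((n:ℝ) + 1) ^ (p + 1) := by ring

/-- Term-by-term differentiation of a power series with polynomially bounded coefficients. -/
lemma fs_hasDerivAt {a : ℕ → ℂ} (ha : PB a) {x : ℂ} (hx : ‖x‖ < 1) :
    HasDerivAt (fs a) (fs (dco a) x) x := by
  obtain ⟨C, p, hC, h⟩ := ha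
  set r : ℝ := (‖x‖ + 1) / 2 with hr
  have hxr : ‖x‖ < r := by rw [hr]; linarith
  have hr0 : 0 < r := by positivity
  have hr1 : r < 1 := by rw [hr]; linarith
  set u : ℕ → ℝ := fun n => C / r * ((n:ℝ) + 1) ^ (p + 1) * r ^ n with hu
  have hus : Summable u := summable_poly_geom _ _ hr0 hr1
  have hbound : ∀ n : ℕ, ∀ y : ℂ, y ∈ Metric.ball (0:ℂ) r →
      ‖a n * ((n : ℂ) * y ^ (n - 1))‖ ≤ u n := by
    intro n y hy
    rw [Metric.mem_ball, dist_zero_right] at hy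
    match n with
    | 0 => simp [hu]; positivity
    | (m+1) =>
      rw [norm_mul, norm_mul, norm_pow, Complex.norm_natCast]
      simp only [Nat.add_sub_cancel]
      have h1 : ‖a (m+1)‖ ≤ C * ((m:ℝ) + 2) ^ p := by
        have hh := h (m+1); push_cast at hh
        rw [show ((m:ℝ) + 2) = ((m:ℝ) + 1 + 1) from by ring]; exact hh
      have h2 : ‖y‖ ^ m ≤ r ^ m := pow_le_pow_left₀ (norm_nonneg y) hy.le m
      have h3 : ((m:ℝ) + 2) ^ p ≤ ((m:ℝ) + 2) ^ (p+1) := by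
        apply pow_le_pow_right₀ (by linarith [Nat.cast_nonneg (α := ℝ) m]) (by omega)
      have key : ‖a (m+1)‖ * (((m+1:ℕ):ℝ)) * ‖y‖ ^ m ≤ (C * ((m:ℝ)+2)^(p+1)) * r ^ m := by
        push_cast
        have hm1 : (m:ℝ) + 1 ≤ (m:ℝ) + 2 := by linarith
        have e1 : ‖a (m+1)‖ * ((m:ℝ)+1) ≤ C * ((m:ℝ)+2)^p * ((m:ℝ)+2) := by
          apply mul_le_mul h1 hm1 (by linarith [Nat.cast_nonneg (α := ℝ) m]) (by positivity)
        have e2 : C * ((m:ℝ)+2)^p * ((m:ℝ)+2) = C * ((m:ℝ)+2)^(p+1) := by ring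
        calc ‖a (m+1)‖ * ((m:ℝ)+1) * ‖y‖ ^ m ≤ (C * ((m:ℝ)+2)^(p+1)) * ‖y‖ ^ m := by
              apply mul_le_mul_of_nonneg_right _ (by positivity)
              rw [← e2]; exact e1
          _ ≤ (C * ((m:ℝ)+2)^(p+1)) * r ^ m := by
              apply mul_le_mul_of_nonneg_left h2 (by positivity)
      have hfin : u (m+1) = (C * ((m:ℝ)+2)^(p+1)) * r ^ m := by
        rw [hu]
        push_cast
        have hrne : r ≠ 0 := ne_of_gt hr0
        field_simp
        ring
      rw [hfin]
      push_cast at key ⊢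
      linarith [key]
  have hderiv : ∀ n : ℕ, ∀ y : ℂ, y ∈ Metric.ball (0:ℂ) r →
      HasDerivAt (fun z : ℂ => a n * z ^ n) (a n * ((n : ℂ) * y ^ (n - 1))) y := by
    intro n y _
    exact (hasDerivAt_pow n y).const_mul (a n)
  have hsum0 : Summable (fun n : ℕ => a n * (0:ℂ) ^ n) :=
    PB.summable ⟨C, p, hC, h⟩ (by simp)
  have hx0 : x ∈ Metric.ball (0:ℂ) r := by rwa [Metric.mem_ball, dist_zero_right]
  have h00 : (0:ℂ) ∈ Metric.ball (0:ℂ) r := by simpa [Metric.mem_ball] using hr0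
  have main := hasDerivAt_tsum_of_isPreconnected hus Metric.isOpen_ball
    (convex_ball (0:ℂ) r).isPreconnected hderiv hbound h00 hsum0 hx0
  have heq : (∑' n : ℕ, a n * ((n : ℂ) * x ^ (n - 1))) = fs (dco a) x := by
    have hsummd : Summable (fun n : ℕ => dco a n * x ^ n) :=
      (PB.dstep ⟨C, p, hC, h⟩).summable hx
    have hsumm : Summable (fun n : ℕ => a n * ((n : ℂ) * x ^ (n - 1))) := by
      apply (summable_nat_add_iff 1).mp
      refine hsummd.congr fun n => ?_
      simp only [dco, Nat.add_sub_cancel]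
      push_cast
      ring
    rw [Summable.tsum_eq_zero_add hsumm]
    simp only [Nat.cast_zero, zero_mul, mul_zero, zero_add, pow_zero]
    rw [fs]
    apply tsum_congr
    intro n
    simp only [dco, Nat.add_sub_cancel]
    push_cast
    ring
  rw [← heq]
  exact main

lemma PB_aco : PB aco := by
  refine ⟨1, 0, zero_le_one, fun n => ?_⟩
  simp only [pow_zero, one_mul]
  have hnum : ‖∏ k ∈ Finset.range n, ((1 : ℂ)/2 + k)‖ ≤ (n.factorial : ℝ) := by
    rw [norm_prod]
    calc ∏ k ∈ Finset.range n, ‖(1 : ℂ)/2 + k‖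
        ≤ ∏ k ∈ Finset.range n, ((k : ℝ) + 1) := by
          apply Finset.prod_le_prod (fun k _ => norm_nonneg _)
          intro k _
          calc ‖(1 : ℂ)/2 + k‖ ≤ ‖(1:ℂ)/2‖ + ‖(k:ℂ)‖ := norm_add_le _ _
            _ = 1/2 + (k:ℝ) := by
                rw [Complex.norm_natCast]
                norm_num
            _ ≤ (k:ℝ) + 1 := by linarith
      _ = (n.factorial : ℝ) := by
          rw [← Finset.prod_range_add_one_eq_factorial]
          push_cast
          exact Finset.prod_congr rfl fun k _ => by ring
  have hfacpos : (0:ℝ) < (n.factorial : ℝ) := by positivity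
  rw [aco]
  rw [norm_pow, norm_div, Complex.norm_natCast]
  have : ‖∏ k ∈ Finset.range n, ((1 : ℂ)/2 + k)‖ / (n.factorial : ℝ) ≤ 1 := by
    rw [div_le_one hfacpos]; exact hnum
  calc (‖∏ k ∈ Finset.range n, ((1 : ℂ)/2 + k)‖ / (n.factorial : ℝ))^2 ≤ 1^2 := by
        apply pow_le_pow_left₀ (by positivity) this
    _ = 1 := one_pow 2

lemma aco_rec (n : ℕ) : ((n:ℂ)+1)^2 * aco (n+1) = ((n:ℂ)+1/2)^2 * aco n := by
  have hfac : ((n.factorial : ℂ)) ≠ 0 := by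
    exact_mod_cast Nat.cast_ne_zero.mpr (Nat.factorial_ne_zero n)
  have hn1 : ((n:ℂ)+1) ≠ 0 := by
    have : ((n+1 : ℕ) : ℂ) ≠ 0 := Nat.cast_ne_zero.mpr (Nat.succ_ne_zero n)
    push_cast at this
    exact this
  simp only [aco, Finset.prod_range_succ, Nat.factorial_succ]
  push_cast
  field_simp
  ring

lemma shift_summable {x : ℂ} {d e : ℕ → ℂ} (hd : Summable (fun n => d n * x ^ n))
    (he : ∀ n, e (n+1) = d n) (h0 : e 0 = 0) : Summable (fun n => e n * x ^ n) := by
  apply (summable_nat_add_iff 1).mp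
  refine (hd.mul_left x).congr fun n => ?_
  rw [he n]
  ring

lemma shift_up {x : ℂ} {d e : ℕ → ℂ} (hd : Summable (fun n => d n * x ^ n))
    (he : ∀ n, e (n+1) = d n) (h0 : e 0 = 0) :
    (∑' n : ℕ, e n * x ^ n) = x * ∑' n : ℕ, d n * x ^ n := by
  rw [Summable.tsum_eq_zero_add (shift_summable hd he h0), h0]
  simp only [zero_mul, zero_add]
  rw [← tsum_mul_left]
  apply tsum_congr
  intro n
  rw [he n]
  ring

/-- The hypergeometric ODE for F(1/2,1/2,1;x), in the form
`x(x-1) f'' + (2x-1) f' + f/4 = 0`. -/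
lemma hyp_ode {x : ℂ} (hx : ‖x‖ < 1) :
    x*(x-1) * fs (dco (dco aco)) x + (2*x-1) * fs (dco aco) x + fs aco x / 4 = 0 := by
  set c1 : ℕ → ℂ := fun n => (n:ℂ) * ((n:ℂ)-1) * aco n with hc1
  set c2 : ℕ → ℂ := fun n => (n:ℂ) * ((n:ℂ)+1) * aco (n+1) with hc2
  set c3 : ℕ → ℂ := fun n => (n:ℂ) * aco n with hc3
  have Sa : Summable (fun n => aco n * x ^ n) := PB_aco.summable hx
  have Sb : Summable (fun n => dco aco n * x ^ n) := PB_aco.dstep.summable hx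
  have Sc : Summable (fun n => dco (dco aco) n * x ^ n) := PB_aco.dstep.dstep.summable hx
  have hc2e : ∀ n, c2 (n+1) = dco (dco aco) n := by
    intro n; simp only [hc2, dco]; push_cast; ring
  have hc20 : c2 0 = 0 := by simp [hc2]
  have hc1e : ∀ n, c1 (n+1) = c2 n := by
    intro n; simp only [hc1, hc2]; push_cast; ring
  have hc10 : c1 0 = 0 := by simp [hc1]
  have hc3e : ∀ n, c3 (n+1) = dco aco n := by
    intro n; simp only [hc3, dco]; push_cast; ring
  have hc30 : c3 0 = 0 := by simp [hc3]
  have S2 : Summable (fun n => c2 n * x ^ n) := shift_summable Sc hc2e hc20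
  have S1 : Summable (fun n => c1 n * x ^ n) := shift_summable S2 hc1e hc10
  have S3 : Summable (fun n => c3 n * x ^ n) := shift_summable Sb hc3e hc30
  have E2 : (∑' n : ℕ, c2 n * x ^ n) = x * fs (dco (dco aco)) x := shift_up Sc hc2e hc20
  have E1 : (∑' n : ℕ, c1 n * x ^ n) = x * (∑' n : ℕ, c2 n * x ^ n) := shift_up S2 hc1e hc10
  have E3 : (∑' n : ℕ, c3 n * x ^ n) = x * fs (dco aco) x := shift_up Sb hc3e hc30
  have S5 : Summable (fun n => (aco n / 4) * x ^ n) := by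
    refine (Sa.mul_left (1/4 : ℂ)).congr fun n => ?_; ring
  have E5 : (∑' n : ℕ, (aco n / 4) * x ^ n) = fs aco x / 4 := by
    rw [fs, ← tsum_div_const]
    exact tsum_congr fun n => by ring
  have H : HasSum
      (fun n => c1 n * x ^ n - c2 n * x ^ n + 2 * (c3 n * x ^ n) - dco aco n * x ^ n
        + (aco n / 4) * x ^ n)
      ((∑' n : ℕ, c1 n * x ^ n) - (∑' n : ℕ, c2 n * x ^ n) + 2 * (∑' n : ℕ, c3 n * x ^ n)
        - (∑' n : ℕ, dco aco n * x ^ n) + (∑' n : ℕ, (aco n / 4) * x ^ n)) := by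
    exact ((((S1.hasSum.sub S2.hasSum).add (S3.hasSum.mul_left 2)).sub Sb.hasSum).add S5.hasSum)
  have Hzero : (fun n : ℕ => c1 n * x ^ n - c2 n * x ^ n + 2 * (c3 n * x ^ n)
      - dco aco n * x ^ n + (aco n / 4) * x ^ n) = fun _ => (0:ℂ) := by
    funext n
    simp only [hc1, hc2, hc3, dco]
    linear_combination (-1 : ℂ) * x ^ n * aco_rec n
  rw [Hzero] at H
  have Hcomb := H.unique hasSum_zero
  rw [E1, E2, E3, E5] at Hcomb
  have hfb : (∑' n : ℕ, dco aco n * x ^ n) = fs (dco aco) x := rfl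
  rw [hfb] at Hcomb
  linear_combination Hcomb

lemma ball_open_eq : {y : ℂ | ‖y‖ < 1} = Metric.ball (0:ℂ) 1 := by
  ext y; simp [Metric.mem_ball, dist_zero_right]

/-- Derivative of the hypergeometric ODE:
`x(x-1) f''' + 2(2x-1) f'' + (9/4) f' = 0`. -/
lemma hyp_ode' {x : ℂ} (hx : ‖x‖ < 1) :
    x*(x-1) * fs (dco (dco (dco aco))) x + 2*(2*x-1) * fs (dco (dco aco)) x
      + (9/4) * fs (dco aco) x = 0 := by
  set P : ℂ → ℂ := fun y =>
    y*(y-1) * fs (dco (dco aco)) y + (2*y-1) * fs (dco aco) y + fs aco y / 4 with hPdef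
  have h0 : HasDerivAt (fs aco) (fs (dco aco) x) x := fs_hasDerivAt PB_aco hx
  have h1 : HasDerivAt (fs (dco aco)) (fs (dco (dco aco)) x) x :=
    fs_hasDerivAt PB_aco.dstep hx
  have h2 : HasDerivAt (fs (dco (dco aco))) (fs (dco (dco (dco aco))) x) x :=
    fs_hasDerivAt PB_aco.dstep.dstep hx
  have hq : HasDerivAt (fun y : ℂ => y*(y-1)) (2*x-1) x := by
    have := (hasDerivAt_id x).mul ((hasDerivAt_id x).sub_const 1)
    exact this.congr_deriv (by simp only [id_eq]; ring)
  have hl : HasDerivAt (fun y : ℂ => 2*y-1) 2 x := by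
    have := ((hasDerivAt_id x).const_mul (2:ℂ)).sub_const 1
    exact this.congr_deriv (by norm_num)
  have hA : HasDerivAt (fun y : ℂ => y*(y-1) * fs (dco (dco aco)) y)
      ((2*x-1) * fs (dco (dco aco)) x + x*(x-1) * fs (dco (dco (dco aco))) x) x := hq.mul h2
  have hB : HasDerivAt (fun y : ℂ => (2*y-1) * fs (dco aco) y)
      (2 * fs (dco aco) x + (2*x-1) * fs (dco (dco aco)) x) x := hl.mul h1
  have hC : HasDerivAt (fun y : ℂ => fs aco y / 4) (fs (dco aco) x / 4) x := h0.div_const 4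
  have hP : HasDerivAt P
      ((2*x-1) * fs (dco (dco aco)) x + x*(x-1) * fs (dco (dco (dco aco))) x
        + (2 * fs (dco aco) x + (2*x-1) * fs (dco (dco aco)) x) + fs (dco aco) x / 4) x :=
    (hA.add hB).add hC
  have hs : IsOpen {y : ℂ | ‖y‖ < 1} := by rw [ball_open_eq]; exact Metric.isOpen_ball
  have hEv : P =ᶠ[nhds x] (fun _ => (0:ℂ)) :=
    Filter.eventuallyEq_of_mem (hs.mem_nhds hx) (fun y hy => hyp_ode hy)
  have h0' : HasDerivAt P (0:ℂ) x := (hasDerivAt_const x (0:ℂ)).congr_of_eventuallyEq hEv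
  have := hP.unique h0'
  linear_combination this

lemma hypF_eq : hypF = fs aco := by
  funext x
  simp only [hypF, fs, aco]


end AuxE3

theorem selfadjoint_E3_solved_by_hypF_sq (x : ℂ) (hx : ‖x‖ < 1) :
    x^2*(x - 1)^2 * iteratedDeriv 3 uSq x
      + 3*x*(x - 1)*(2*x - 1) * iteratedDeriv 2 uSq x
      + (7*x^2 - 7*x + 1) * deriv uSq x
      + (x - 1/2) * uSq x = 0 := by
  have husq : uSq = fun z => (fs aco z)^2 := by
    funext z; rw [uSq, hypF_eq]
  set u1 : ℂ → ℂ := fun y => 2 * fs aco y * fs (dco aco) y with hu1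
  set u2 : ℂ → ℂ := fun y =>
    2 * fs (dco aco) y ^ 2 + 2 * fs aco y * fs (dco (dco aco)) y with hu2
  have hs : IsOpen {y : ℂ | ‖y‖ < 1} := by rw [ball_open_eq]; exact Metric.isOpen_ball
  have hd0 : ∀ y : ℂ, ‖y‖ < 1 → HasDerivAt (fs aco) (fs (dco aco) y) y :=
    fun y hy => fs_hasDerivAt PB_aco hy
  have hd1 : ∀ y : ℂ, ‖y‖ < 1 → HasDerivAt (fs (dco aco)) (fs (dco (dco aco)) y) y :=
    fun y hy => fs_hasDerivAt PB_aco.dstep hy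
  have hd2 : ∀ y : ℂ, ‖y‖ < 1 →
      HasDerivAt (fs (dco (dco aco))) (fs (dco (dco (dco aco))) y) y :=
    fun y hy => fs_hasDerivAt PB_aco.dstep.dstep hy
  have hdu : ∀ y : ℂ, ‖y‖ < 1 → HasDerivAt uSq (u1 y) y := by
    intro y hy
    rw [husq]
    have := (hd0 y hy).pow 2
    exact this.congr_deriv (by simp only [hu1]; push_cast; ring)
  have hderiv1 : ∀ y : ℂ, ‖y‖ < 1 → deriv uSq y = u1 y := fun y hy => (hdu y hy).deriv
  have hdu1 : ∀ y : ℂ, ‖y‖ < 1 → HasDerivAt u1 (u2 y) y := by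
    intro y hy
    have := (((hd0 y hy).const_mul (2:ℂ)).mul (hd1 y hy))
    exact this.congr_deriv (by simp only [hu2]; ring)
  have hderiv2 : ∀ y : ℂ, ‖y‖ < 1 → iteratedDeriv 2 uSq y = u2 y := by
    intro y hy
    rw [iteratedDeriv_succ, iteratedDeriv_one]
    have hev : deriv uSq =ᶠ[nhds y] u1 :=
      Filter.eventuallyEq_of_mem (hs.mem_nhds hy) (fun z hz => hderiv1 z hz)
    rw [hev.deriv_eq]
    exact (hdu1 y hy).deriv
  have hderiv3 : iteratedDeriv 3 uSq x
      = 6 * fs (dco aco) x * fs (dco (dco aco)) x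
        + 2 * fs aco x * fs (dco (dco (dco aco))) x := by
    rw [iteratedDeriv_succ]
    have hev : iteratedDeriv 2 uSq =ᶠ[nhds x] u2 :=
      Filter.eventuallyEq_of_mem (hs.mem_nhds hx) (fun z hz => hderiv2 z hz)
    rw [hev.deriv_eq]
    have hA := ((hd1 x hx).pow 2).const_mul (2:ℂ)
    have hB := ((hd0 x hx).const_mul (2:ℂ)).mul (hd2 x hx)
    have := (hA.add hB).deriv
    rw [hu2]
    have harg : u2 = fun y => 2 * fs (dco aco) y ^ 2 + 2 * fs aco y * fs (dco (dco aco)) y := hu2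
    rw [show (fun y => 2 * fs (dco aco) y ^ 2 + 2 * fs aco y * fs (dco (dco aco)) y)
        = (fun y => (2 * fs (dco aco) y ^ 2) + (2 * fs aco y) * fs (dco (dco aco)) y) from rfl]
    refine Eq.trans this ?_
    push_cast
    ring
  have hP := hyp_ode hx
  have hQ := hyp_ode' hx
  rw [hderiv3, hderiv2 x hx, hderiv1 x hx, husq, hu1, hu2]
  linear_combination (2*x*(x-1)* fs aco x) * hQ
    + (6*x*(x-1)* fs (dco aco) x + 2*(2*x-1)* fs aco x) * hP
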